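/- arXiv:2403.20318 — 4 statements merged into one kernel-verified Lean document; each statement's English description precedes it below -/
import Mathlib

section
/- Let η ~ N(0, σ²) with σ > 0 and ℓ > 0. Define the dice-loss gradient ε(η) = sign(η)/ℓ if |η| ≤ ℓ and ε(η) = 0 if |η| > ℓ. Then E[ε] = 0 and Var(ε) = (1/ℓ²)·Erf(ℓ/(√2 σ)). -/
open ProbabilityTheory MeasureTheory

/-- The Gauss error function. -/
noncomputable def erf (x : ℝ) : ℝ := (2 / Real.sqrt Real.pi) * ∫ t in (0:ℝ)..x, Real.exp (-t ^ 2)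

/-- The a.e. gradient of the dice loss: `sign(η)/ℓ` if `|η| ≤ ℓ`, else `0`. -/
noncomputable def diceGrad (ℓ η : ℝ) : ℝ := if |η| ≤ ℓ then Real.sign η / ℓ else 0

lemma measurable_realSign : Measurable Real.sign := by
  have : Real.sign = fun r : ℝ => if r < 0 then (-1 : ℝ) else if 0 < r then 1 else 0 := by
    funext r; rfl
  rw [this]
  exact Measurable.ite (measurableSet_lt measurable_id measurable_const) measurable_const
    (Measurable.ite (measurableSet_lt measurable_const measurable_id) measurable_const
      measurable_const)

lemma measurable_diceGrad (ℓ : ℝ) : Measurable (diceGrad ℓ) := by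
  unfold diceGrad
  exact Measurable.ite (measurableSet_le measurable_id.abs measurable_const)
    (measurable_realSign.div_const ℓ) measurable_const

lemma diceGrad_neg (ℓ x : ℝ) : diceGrad ℓ (-x) = -diceGrad ℓ x := by
  simp only [diceGrad, abs_neg, Real.sign_neg, neg_div]
  split <;> simp

lemma abs_diceGrad_le (ℓ : ℝ) (hℓ : 0 < ℓ) (x : ℝ) : |diceGrad ℓ x| ≤ 1 / ℓ := by
  unfold diceGrad
  split
  · rw [abs_div, abs_of_pos hℓ]
    gcongr
    rcases lt_trichotomy x 0 with h | h | h
    · simp [Real.sign_of_neg h]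
    · simp [h, Real.sign_zero]
    · simp [Real.sign_of_pos h]
  · simp [le_div_iff₀ hℓ, hℓ.le]

lemma sq_diceGrad (ℓ x : ℝ) (hx : x ≠ 0) :
    diceGrad ℓ x ^ 2 = Set.indicator (Set.Icc (-ℓ) ℓ) (fun _ => (1 / ℓ ^ 2)) x := by
  have hs : Real.sign x ^ 2 = 1 := by
    rcases hx.lt_or_gt with h | h
    · simp [Real.sign_of_neg h]
    · simp [Real.sign_of_pos h]
  unfold diceGrad
  rw [Set.indicator_apply]
  simp only [Set.mem_Icc, ← abs_le]
  split
  · rw [div_pow, hs, one_div]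
  · simp

theorem dice_gradient_mean_variance (σ ℓ : ℝ) (hσ : 0 < σ) (hℓ : 0 < ℓ) :
    (∫ x, diceGrad ℓ x ∂(gaussianReal 0 ⟨σ ^ 2, sq_nonneg σ⟩) = 0) ∧
    variance (diceGrad ℓ) (gaussianReal 0 ⟨σ ^ 2, sq_nonneg σ⟩) =
      (1 / ℓ ^ 2) * erf (ℓ / (Real.sqrt 2 * σ)) := by
  set v : NNReal := ⟨σ ^ 2, sq_nonneg σ⟩ with hv
  have hv0 : v ≠ 0 := by
    simp only [hv, ne_eq, ← NNReal.coe_eq_zero, NNReal.coe_mk]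
    exact fun h => (pow_pos hσ 2).ne' (congrArg NNReal.toReal h)
  set μ := gaussianReal 0 v with hμ
  -- symmetry of the Gaussian
  have hmap : μ.map (fun x => -x) = μ := by
    have h := gaussianReal_map_const_mul (μ := 0) (v := v) (-1)
    have h1 : (NNReal.mk ((-1 : ℝ) ^ 2) (sq_nonneg _)) = 1 := by
      ext; norm_num
    rw [h1, mul_zero, one_mul] at h
    simpa [neg_one_mul] using h
  have hmeas := measurable_diceGrad ℓ
  -- mean is zero
  have hmean : ∫ x, diceGrad ℓ x ∂μ = 0 := by
    have h1 : ∫ x, diceGrad ℓ x ∂μ = ∫ x, diceGrad ℓ (-x) ∂μ := by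
      conv_lhs => rw [← hmap]
      rw [integral_map measurable_neg.aemeasurable hmeas.aestronglyMeasurable]
    rw [show (fun x => diceGrad ℓ (-x)) = fun x => -diceGrad ℓ x from
      funext fun x => diceGrad_neg ℓ x, integral_neg] at h1
    linarith
  refine ⟨hmean, ?_⟩
  -- Memℒp 2
  have hmem : MemLp (diceGrad ℓ) 2 μ := by
    refine (memLp_top_of_bound hmeas.aestronglyMeasurable (1 / ℓ) ?_ : MemLp _ ⊤ μ).mono_exponent
      le_top
    exact Filter.Eventually.of_forall fun x => abs_diceGrad_le ℓ hℓ x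
  rw [variance_eq_sub hmem, hmean]
  simp only [ne_eq, OfNat.ofNat_ne_zero, not_false_eq_true, zero_pow, sub_zero]
  -- second moment
  have hzero : μ {(0 : ℝ)} = 0 := by
    refine gaussianReal_absolutelyContinuous 0 hv0 ?_
    simp
  have hae : (fun x => diceGrad ℓ x ^ 2)
      =ᵐ[μ] Set.indicator (Set.Icc (-ℓ) ℓ) (fun _ => (1 / ℓ ^ 2)) := by
    refine Filter.eventuallyEq_of_mem (compl_mem_ae_iff.2 hzero) fun x hx => ?_
    exact sq_diceGrad ℓ x (by simpa using hx)
  have hsq : ∫ x, diceGrad ℓ x ^ 2 ∂μ = (μ (Set.Icc (-ℓ) ℓ)).toReal * (1 / ℓ ^ 2) := by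
    rw [show (fun x => diceGrad ℓ x ^ 2) = (diceGrad ℓ) ^ 2 from rfl] at hae ⊢
    rw [integral_congr_ae hae, integral_indicator_const _ measurableSet_Icc]
    simp [mul_comm, Measure.real]
  rw [show ((diceGrad ℓ) ^ 2 : ℝ → ℝ) = fun x => diceGrad ℓ x ^ 2 from rfl, hsq]
  -- compute the Gaussian measure of the interval
  have hπ : (0:ℝ) < Real.pi := Real.pi_pos
  have hIcc : (μ (Set.Icc (-ℓ) ℓ)).toReal = erf (ℓ / (Real.sqrt 2 * σ)) := by
    rw [hμ, gaussianReal_apply_eq_integral 0 hv0, ENNReal.toReal_ofReal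
      (integral_nonneg fun x => gaussianPDFReal_nonneg 0 v x)]
    have hle : -ℓ ≤ ℓ := by linarith
    rw [MeasureTheory.integral_Icc_eq_integral_Ioc,
      ← intervalIntegral.integral_of_le hle]
    have hvr : (v : ℝ) = σ ^ 2 := rfl
    simp only [gaussianPDFReal, hvr, sub_zero]
    rw [intervalIntegral.integral_const_mul]
    set c : ℝ := Real.sqrt 2 * σ with hc
    have hc0 : c ≠ 0 := by positivity
    set a : ℝ := ℓ / c with ha
    have hca : c * a = ℓ := by rw [ha]; field_simp
    have hcsq : c ^ 2 = 2 * σ ^ 2 := by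
      rw [hc, mul_pow, Real.sq_sqrt (by norm_num : (2:ℝ) ≥ 0)]
    have hsub : ∫ x in (-ℓ : ℝ)..ℓ, Real.exp (-x ^ 2 / (2 * σ ^ 2))
        = c * ∫ t in (-a : ℝ)..a, Real.exp (-t ^ 2) := by
      have := intervalIntegral.integral_comp_mul_left
        (fun x => Real.exp (-x ^ 2 / (2 * σ ^ 2))) hc0 (a := -a) (b := a)
      rw [mul_neg, hca] at this
      have heq : ∀ t : ℝ, Real.exp (-(c * t) ^ 2 / (2 * σ ^ 2)) = Real.exp (-t ^ 2) := by
        intro t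
        congr 1
        rw [mul_pow, hcsq]
        field_simp
      simp only [heq] at this
      rw [this, smul_eq_mul]
      field_simp
    have heven : ∫ t in (-a : ℝ)..a, Real.exp (-t ^ 2)
        = 2 * ∫ t in (0:ℝ)..a, Real.exp (-t ^ 2) := by
      have hcont : Continuous fun t : ℝ => Real.exp (-t ^ 2) := by continuity
      have h1 : ∫ t in (-a : ℝ)..(0:ℝ), Real.exp (-t ^ 2)
          = ∫ t in (0:ℝ)..a, Real.exp (-t ^ 2) := by
        have := intervalIntegral.integral_comp_neg (a := (0:ℝ)) (b := a)
          (fun t => Real.exp (-t ^ 2))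
        simpa [neg_zero] using this.symm
      rw [← intervalIntegral.integral_add_adjacent_intervals
        (hcont.intervalIntegrable (-a) 0) (hcont.intervalIntegrable 0 a), h1]
      ring
    rw [hsub, heven]
    have hsqrt : Real.sqrt (2 * Real.pi * σ ^ 2) = Real.sqrt 2 * Real.sqrt Real.pi * σ := by
      rw [Real.sqrt_mul (by positivity), Real.sqrt_mul (by norm_num),
        Real.sqrt_sq hσ.le]
    rw [hsqrt, erf]
    have h2 : Real.sqrt 2 ≠ 0 := by positivity
    have hπ' : Real.sqrt Real.pi ≠ 0 := by positivity
    field_simp [hc]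
    ring
  rw [hIcc, mul_comm]
end

section
/- For a standard normal random variable X and any x > 0, P(X > x) ≥ ((√(4 + x²) − x)/2) · (1/√(2π)) · e^{−x²/2}. -/
open ProbabilityTheory MeasureTheory

open Real Filter Set

noncomputable def birn_f (t : ℝ) : ℝ := -((Real.sqrt (4 + t ^ 2) - t) / 2 * Real.exp (-t ^ 2 / 2))

noncomputable def birn_g (t : ℝ) : ℝ :=
  ((1 - t / Real.sqrt (4 + t ^ 2)) / 2 + t * ((Real.sqrt (4 + t ^ 2) - t) / 2)) *
    Real.exp (-t ^ 2 / 2)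

lemma birn_sq_pos (t : ℝ) : (0:ℝ) < 4 + t ^ 2 := by positivity

lemma birn_s_pos (t : ℝ) : 0 < Real.sqrt (4 + t ^ 2) := Real.sqrt_pos.2 (birn_sq_pos t)

lemma birn_s_sq (t : ℝ) : Real.sqrt (4 + t ^ 2) ^ 2 = 4 + t ^ 2 :=
  Real.sq_sqrt (birn_sq_pos t).le

lemma birn_hasDerivAt (t : ℝ) : HasDerivAt birn_f (birn_g t) t := by
  have h1 : HasDerivAt (fun t : ℝ => 4 + t ^ 2) (2 * t) t := by
    simpa using (hasDerivAt_pow 2 t).const_add 4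
  have hs : HasDerivAt (fun t : ℝ => Real.sqrt (4 + t ^ 2))
      (2 * t / (2 * Real.sqrt (4 + t ^ 2))) t := h1.sqrt (birn_sq_pos t).ne'
  have hu : HasDerivAt (fun t : ℝ => (Real.sqrt (4 + t ^ 2) - t) / 2)
      ((2 * t / (2 * Real.sqrt (4 + t ^ 2)) - 1) / 2) t :=
    (hs.sub (hasDerivAt_id t)).div_const 2
  have he : HasDerivAt (fun t : ℝ => Real.exp (-t ^ 2 / 2))
      (Real.exp (-t ^ 2 / 2) * (-(2 * t) / 2)) t := by
    have : HasDerivAt (fun t : ℝ => -t ^ 2 / 2) (-(2 * t) / 2) t := by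
      simpa using ((hasDerivAt_pow 2 t).neg.div_const 2)
    exact this.exp
  have := (hu.mul he).neg
  refine this.congr_deriv ?_
  have hs0 := birn_s_pos t
  unfold birn_g
  field_simp
  ring

lemma birn_g_nonneg {t : ℝ} (ht : 0 ≤ t) : 0 ≤ birn_g t := by
  unfold birn_g
  have hs0 := birn_s_pos t
  have hs2 := birn_s_sq t
  have hlt : t < Real.sqrt (4 + t ^ 2) := by nlinarith [hs0, hs2]
  have h1 : t / Real.sqrt (4 + t ^ 2) ≤ 1 := by
    rw [div_le_one hs0]; exact hlt.le
  have h0 : 0 ≤ (1 - t / Real.sqrt (4 + t ^ 2)) / 2 + t * ((Real.sqrt (4 + t ^ 2) - t) / 2) := by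
    have h2 : 0 ≤ t * ((Real.sqrt (4 + t ^ 2) - t) / 2) :=
      mul_nonneg ht (by linarith)
    linarith
  exact mul_nonneg h0 (Real.exp_nonneg _)

lemma birn_g_le {t : ℝ} (ht : 0 ≤ t) : birn_g t ≤ Real.exp (-t ^ 2 / 2) := by
  have hs0 := birn_s_pos t
  have hs2 := birn_s_sq t
  set s := Real.sqrt (4 + t ^ 2) with hsdef
  have key : t * (t ^ 2 + 3) ≤ s * (t ^ 2 + 1) := by
    have hab : (s * (t ^ 2 + 1)) ^ 2 = (t * (t ^ 2 + 3)) ^ 2 + 4 := by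
      rw [mul_pow, hs2]; ring
    nlinarith [hab, (show 0 < s * (t ^ 2 + 1) by positivity)]
  have hcoef : (1 - t / s) / 2 + t * ((s - t) / 2) ≤ 1 := by
    have h1 : 1 - t / s = (s - t) / s := by field_simp
    rw [h1]
    rw [div_div, div_add' _ _ _ (by positivity : (s*2) ≠ 0), div_le_one (by positivity)]
    nlinarith [key, hs2, hs0, ht]
  unfold birn_g
  calc ((1 - t / s) / 2 + t * ((s - t) / 2)) * Real.exp (-t ^ 2 / 2) ≤ 1 * Real.exp (-t ^ 2 / 2) :=
        mul_le_mul_of_nonneg_right hcoef (Real.exp_nonneg _)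
    _ = Real.exp (-t ^ 2 / 2) := one_mul _

lemma birn_exp_integrableOn (x : ℝ) :
    IntegrableOn (fun t : ℝ => Real.exp (-t ^ 2 / 2)) (Ioi x) := by
  have h : Integrable (fun t : ℝ => Real.exp (-(1/2 : ℝ) * t ^ 2)) :=
    integrable_exp_neg_mul_sq (by norm_num)
  have h2 : Integrable (fun t : ℝ => Real.exp (-t ^ 2 / 2)) := by
    convert h using 2 with t
    ring_nf
  exact h2.integrableOn

lemma birn_g_continuous : Continuous birn_g := by
  unfold birn_g
  have hs : Continuous fun t : ℝ => Real.sqrt (4 + t ^ 2) :=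
    (continuous_const.add (continuous_pow 2)).sqrt
  fun_prop (disch := exact fun t => (birn_s_pos t).ne')
  
lemma birn_g_integrableOn (x : ℝ) (hx : 0 ≤ x) : IntegrableOn birn_g (Ioi x) := by
  refine (birn_exp_integrableOn x).mono' (birn_g_continuous.aestronglyMeasurable.restrict) ?_
  filter_upwards [ae_restrict_mem measurableSet_Ioi] with t ht
  rw [Real.norm_eq_abs, abs_of_nonneg (birn_g_nonneg (hx.trans ht.le))]
  exact birn_g_le (hx.trans ht.le)

lemma birn_f_tendsto : Tendsto birn_f atTop (nhds 0) := by
  have hE : Tendsto (fun t : ℝ => Real.exp (-t ^ 2 / 2)) atTop (nhds 0) := by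
    have h1 : Tendsto (fun t : ℝ => t ^ 2 / 2) atTop atTop :=
      (tendsto_pow_atTop two_ne_zero).atTop_div_const (by norm_num)
    have h2 : Tendsto (fun t : ℝ => -t ^ 2 / 2) atTop atBot := by
      simp only [neg_div]
      exact tendsto_neg_atBot_iff.2 h1
    exact Real.tendsto_exp_atBot.comp h2
  apply squeeze_zero_norm' ?_ hE
  filter_upwards [eventually_ge_atTop (0:ℝ)] with t ht
  have hs0 := birn_s_pos t
  have hs2 := birn_s_sq t
  have h1 : Real.sqrt (4 + t ^ 2) - t ≤ 2 := by nlinarith [hs0, hs2, ht]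
  have h2 : 0 ≤ Real.sqrt (4 + t ^ 2) - t := by nlinarith [hs0, hs2]
  unfold birn_f
  rw [norm_neg, Real.norm_eq_abs, abs_of_nonneg (by positivity : (0:ℝ) ≤ (Real.sqrt (4 + t ^ 2) - t) / 2 * Real.exp (-t ^ 2 / 2))]
  calc (Real.sqrt (4 + t ^ 2) - t) / 2 * Real.exp (-t ^ 2 / 2)
      ≤ 1 * Real.exp (-t ^ 2 / 2) := by
        apply mul_le_mul_of_nonneg_right (by linarith) (Real.exp_nonneg _)
    _ = _ := one_mul _

lemma birn_ftc (x : ℝ) (hx : 0 < x) :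
    ∫ t in Ioi x, birn_g t = (Real.sqrt (4 + x ^ 2) - x) / 2 * Real.exp (-x ^ 2 / 2) := by
  have := integral_Ioi_of_hasDerivAt_of_tendsto' (f := birn_f) (f' := birn_g) (a := x) (m := 0)
    (fun t _ => birn_hasDerivAt t) (birn_g_integrableOn x hx.le) birn_f_tendsto
  rw [this]; unfold birn_f; ring

/-- Birnbaum's lower bound on the Gaussian tail probability: for `X ~ N(0,1)` and `x > 0`,
`P(X > x) ≥ ((√(4+x²) − x)/2) · (1/√(2π)) · e^{−x²/2}`. -/
theorem birnbaum_gaussian_tail_lower_bound (x : ℝ) (hx : 0 < x) :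
    ENNReal.ofReal
        ((Real.sqrt (4 + x ^ 2) - x) / 2 * (1 / Real.sqrt (2 * Real.pi)) *
          Real.exp (-x ^ 2 / 2)) ≤
      (gaussianReal 0 1) {y : ℝ | x < y} := by
  have hset : {y : ℝ | x < y} = Ioi x := rfl
  rw [hset, gaussianReal_apply_eq_integral 0 one_ne_zero]
  apply ENNReal.ofReal_le_ofReal
  have hpdf : ∀ t : ℝ, gaussianPDFReal 0 1 t = (Real.sqrt (2 * Real.pi))⁻¹ * Real.exp (-t ^ 2 / 2) := by
    intro t
    simp [gaussianPDFReal]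
  have hInt : ∫ t in Ioi x, gaussianPDFReal 0 1 t
      = (Real.sqrt (2 * Real.pi))⁻¹ * ∫ t in Ioi x, Real.exp (-t ^ 2 / 2) := by
    simp_rw [hpdf]
    rw [integral_const_mul]
  rw [hInt]
  have hmain : (Real.sqrt (4 + x ^ 2) - x) / 2 * Real.exp (-x ^ 2 / 2)
      ≤ ∫ t in Ioi x, Real.exp (-t ^ 2 / 2) := by
    rw [← birn_ftc x hx]
    apply setIntegral_mono_on (birn_g_integrableOn x hx.le) (birn_exp_integrableOn x)
      measurableSet_Ioi
    intro t ht
    exact birn_g_le (hx.le.trans (le_of_lt ht))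
  have hc : (0:ℝ) < (Real.sqrt (2 * Real.pi))⁻¹ := by
    rw [inv_pos]
    exact Real.sqrt_pos.2 (by positivity)
  calc (Real.sqrt (4 + x ^ 2) - x) / 2 * (1 / Real.sqrt (2 * Real.pi)) * Real.exp (-x ^ 2 / 2)
      = (Real.sqrt (2 * Real.pi))⁻¹ * ((Real.sqrt (4 + x ^ 2) - x) / 2 * Real.exp (-x ^ 2 / 2)) := by
        ring
    _ ≤ _ := by
        exact mul_le_mul_of_nonneg_left hmain hc.le
end

section
/- For all x > 0, Erf(x/√2) ≤ 1 − (2/(x + √(4 + x²))) · √(2/π) · e^{−x²/2}. -/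
open Real MeasureTheory Set Filter intervalIntegral

noncomputable def erfAuxG (y : ℝ) : ℝ := (Real.sqrt (2 + y ^ 2) - y) / 2

lemma erfAuxIntegrable : Integrable (fun t : ℝ => Real.exp (-t ^ 2)) := by
  simpa using integrable_exp_neg_mul_sq (by norm_num : (0:ℝ) < 1)

lemma erfAux_key_ineq (y : ℝ) : 3 * y + 2 * y ^ 3 ≤ Real.sqrt (2 + y ^ 2) * (1 + 2 * y ^ 2) := by
  set r := Real.sqrt (2 + y ^ 2) with hr
  have hrpos : 0 < r := Real.sqrt_pos.2 (by positivity)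
  have hr2 : r ^ 2 = 2 + y ^ 2 := Real.sq_sqrt (by positivity)
  have hA : 0 < r * (1 + 2 * y ^ 2) := by positivity
  have h1 : (3 * y + 2 * y ^ 3) ^ 2 + 2 = (r * (1 + 2 * y ^ 2)) ^ 2 := by
    rw [mul_pow, hr2]; ring
  nlinarith [sq_nonneg (r * (1 + 2 * y ^ 2) - (3 * y + 2 * y ^ 3))]

lemma erfAux_hasDeriv (a y : ℝ) :
    HasDerivAt (fun y => (∫ t in a..y, Real.exp (-t ^ 2)) + erfAuxG y * Real.exp (-y ^ 2))
      (Real.exp (-y ^ 2) + (((2 * y) / (2 * Real.sqrt (2 + y ^ 2)) - 1) / 2 * Real.exp (-y ^ 2)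
        + erfAuxG y * (Real.exp (-y ^ 2) * (-(2 * y))))) y := by
  have hc : Continuous fun t : ℝ => Real.exp (-t ^ 2) := by continuity
  have h1 : HasDerivAt (fun u => ∫ t in a..u, Real.exp (-t ^ 2)) (Real.exp (-y ^ 2)) y :=
    intervalIntegral.integral_hasDerivAt_right (erfAuxIntegrable.intervalIntegrable)
      (hc.stronglyMeasurable.stronglyMeasurableAtFilter) hc.continuousAt
  have hsq : HasDerivAt (fun y : ℝ => 2 + y ^ 2) (2 * y) y := by
    simpa using (hasDerivAt_pow 2 y).const_add 2
  have hG : HasDerivAt erfAuxG (((2 * y) / (2 * Real.sqrt (2 + y ^ 2)) - 1) / 2) y := by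
    exact ((hsq.sqrt (by positivity)).sub (hasDerivAt_id y)).div_const 2
  have hE : HasDerivAt (fun y : ℝ => Real.exp (-y ^ 2)) (Real.exp (-y ^ 2) * (-(2 * y))) y := by
    have : HasDerivAt (fun y : ℝ => -y ^ 2) (-(2 * y)) y := by
      simpa using (hasDerivAt_pow 2 y).fun_neg
    exact this.exp
  exact h1.add (hG.mul hE)

lemma erfAux_deriv_nonneg (y : ℝ) :
    0 ≤ Real.exp (-y ^ 2) + (((2 * y) / (2 * Real.sqrt (2 + y ^ 2)) - 1) / 2 * Real.exp (-y ^ 2)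
        + erfAuxG y * (Real.exp (-y ^ 2) * (-(2 * y)))) := by
  set r := Real.sqrt (2 + y ^ 2) with hr
  have hrpos : 0 < r := Real.sqrt_pos.2 (by positivity)
  have hr2 : r ^ 2 = 2 + y ^ 2 := Real.sq_sqrt (by positivity)
  have hkey := erfAux_key_ineq y
  have heq : Real.exp (-y ^ 2) + (((2 * y) / (2 * r) - 1) / 2 * Real.exp (-y ^ 2)
        + erfAuxG y * (Real.exp (-y ^ 2) * (-(2 * y))))
      = Real.exp (-y ^ 2) / (2 * r) * (r + y + 2 * y ^ 2 * r - 2 * y * r ^ 2) := by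
    rw [erfAuxG, ← hr]; field_simp; ring
  rw [heq]
  have h3 : 0 ≤ r * (1 + 2 * y ^ 2) - (3 * y + 2 * y ^ 3) := by linarith [hkey]
  have h4 : 2 * y * r ^ 2 = 4 * y + 2 * y ^ 3 := by rw [hr2]; ring
  have h5 : 0 ≤ r + y + 2 * y ^ 2 * r - 2 * y * r ^ 2 := by nlinarith [h3, h4]
  positivity

lemma erfAux_tail_bound (a : ℝ) :
    erfAuxG a * Real.exp (-a ^ 2) ≤ ∫ t in Set.Ioi a, Real.exp (-t ^ 2) := by
  set φ : ℝ → ℝ := fun y => (∫ t in a..y, Real.exp (-t ^ 2)) + erfAuxG y * Real.exp (-y ^ 2) with hφ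
  have hmono : Monotone φ :=
    monotone_of_deriv_nonneg (fun y => (erfAux_hasDeriv a y).differentiableAt)
      (fun y => by rw [(erfAux_hasDeriv a y).deriv]; exact erfAux_deriv_nonneg y)
  have hφa : φ a = erfAuxG a * Real.exp (-a ^ 2) := by
    simp [hφ]
  -- φ b tends to the improper integral
  have hT1 : Tendsto (fun b => ∫ t in a..b, Real.exp (-t ^ 2)) atTop
      (nhds (∫ t in Set.Ioi a, Real.exp (-t ^ 2))) :=
    intervalIntegral_tendsto_integral_Ioi a erfAuxIntegrable.integrableOn tendsto_id
  have hE0 : Tendsto (fun b : ℝ => Real.exp (-b ^ 2)) atTop (nhds 0) := by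
    apply Real.tendsto_exp_atBot.comp
    have : Tendsto (fun b : ℝ => b ^ 2) atTop atTop := tendsto_pow_atTop (by norm_num)
    exact tendsto_neg_atBot_iff.2 this
  have hT2 : Tendsto (fun b => erfAuxG b * Real.exp (-b ^ 2)) atTop (nhds 0) := by
    apply squeeze_zero' (g := fun b : ℝ => 2 * Real.exp (-b ^ 2))
    · filter_upwards [eventually_ge_atTop (0:ℝ)] with b hb
      have : b ≤ Real.sqrt (2 + b ^ 2) :=
        le_trans (le_of_eq (Real.sqrt_sq hb).symm) (Real.sqrt_le_sqrt (by linarith))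
      have : 0 ≤ erfAuxG b := by rw [erfAuxG]; linarith
      positivity
    · filter_upwards [eventually_ge_atTop (0:ℝ)] with b hb
      have h1 : Real.sqrt (2 + b ^ 2) ≤ b + Real.sqrt 2 := by
        rw [show b + Real.sqrt 2 = Real.sqrt ((b + Real.sqrt 2) ^ 2) by
          rw [Real.sqrt_sq (by positivity)]]
        apply Real.sqrt_le_sqrt
        nlinarith [Real.sq_sqrt (show (0:ℝ) ≤ 2 by norm_num),
          Real.sqrt_nonneg 2, mul_nonneg hb (Real.sqrt_nonneg 2)]
      have h2 : Real.sqrt 2 ≤ 2 := by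
        nlinarith [Real.sq_sqrt (show (0:ℝ) ≤ 2 by norm_num), Real.sqrt_nonneg 2]
      have hG2 : erfAuxG b ≤ 2 := by rw [erfAuxG]; linarith
      have := (Real.exp_pos (-b ^ 2)).le
      nlinarith [hG2, this]
    · simpa using hE0.const_mul 2
  have hT : Tendsto φ atTop (nhds (∫ t in Set.Ioi a, Real.exp (-t ^ 2))) := by
    simpa using hT1.add hT2
  rw [← hφa]
  exact ge_of_tendsto hT (eventually_ge_atTop a |>.mono fun b hb => hmono hb)



theorem erf_upper_bound (x : ℝ) (hx : 0 < x) :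
    erf (x / Real.sqrt 2) ≤
      1 - (2 / (x + Real.sqrt (4 + x ^ 2))) * Real.sqrt (2 / Real.pi) *
        Real.exp (-x ^ 2 / 2) := by
  have h2pos : (0:ℝ) < Real.sqrt 2 := Real.sqrt_pos.2 (by norm_num)
  have hs2 : (Real.sqrt 2) ^ 2 = 2 := Real.sq_sqrt (by norm_num)
  set a := x / Real.sqrt 2 with ha
  have ha0 : 0 ≤ a := by positivity
  have ha2 : a ^ 2 = x ^ 2 / 2 := by rw [ha, div_pow, hs2]
  set s := Real.sqrt (4 + x ^ 2) with hsdef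
  have hs_sq : s ^ 2 = 4 + x ^ 2 := Real.sq_sqrt (by positivity)
  have hs_pos : 0 < s := Real.sqrt_pos.2 (by positivity)
  have hpi : (0:ℝ) < Real.sqrt Real.pi := Real.sqrt_pos.2 Real.pi_pos
  have hsa : Real.sqrt (2 + a ^ 2) = s / Real.sqrt 2 := by
    rw [show 2 + a ^ 2 = (s / Real.sqrt 2) ^ 2 by
      rw [ha2, div_pow, hs_sq, hs2]; ring]
    exact Real.sqrt_sq (by positivity)
  have hGa : erfAuxG a = (s - x) / (2 * Real.sqrt 2) := by
    rw [erfAuxG, hsa, ha]; ring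
  have hIoi0 : (∫ t in Set.Ioi (0:ℝ), Real.exp (-t ^ 2)) = Real.sqrt Real.pi / 2 := by
    simpa using integral_gaussian_Ioi 1
  have hsplit : (∫ t in (0:ℝ)..a, Real.exp (-t ^ 2))
      = Real.sqrt Real.pi / 2 - ∫ t in Set.Ioi a, Real.exp (-t ^ 2) := by
    have hu : (∫ t in Set.Ioc (0:ℝ) a, Real.exp (-t ^ 2))
        + (∫ t in Set.Ioi a, Real.exp (-t ^ 2))
        = ∫ t in Set.Ioi (0:ℝ), Real.exp (-t ^ 2) := by
      rw [← MeasureTheory.setIntegral_union (Set.Ioc_disjoint_Ioi le_rfl) measurableSet_Ioi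
        erfAuxIntegrable.integrableOn erfAuxIntegrable.integrableOn, Set.Ioc_union_Ioi_eq_Ioi ha0]
    rw [intervalIntegral.integral_of_le ha0]
    linarith [hu, hIoi0]
  have hI := erfAux_tail_bound a
  have hEa : Real.exp (-a ^ 2) = Real.exp (-x ^ 2 / 2) := by rw [ha2]; ring_nf
  have hsqrt_div : Real.sqrt (2 / Real.pi) = Real.sqrt 2 / Real.sqrt Real.pi :=
    Real.sqrt_div (by norm_num) Real.pi
  have hxs : 0 < x + s := by linarith
  have h4 : (s - x) * (s + x) = 4 := by nlinarith [hs_sq]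
  have hfrac : 2 / (x + s) = (s - x) / 2 := by
    rw [div_eq_div_iff hxs.ne' (two_ne_zero)]; nlinarith [h4]
  have key : (2 / (x + s)) * Real.sqrt (2 / Real.pi) * Real.exp (-x ^ 2 / 2)
      = 2 / Real.sqrt Real.pi * ((s - x) / (2 * Real.sqrt 2) * Real.exp (-x ^ 2 / 2)) := by
    rw [hfrac, hsqrt_div]
    field_simp
    have h22 : Real.sqrt 2 * Real.sqrt 2 = 2 := Real.mul_self_sqrt (by norm_num)
    linear_combination (s - x) * hs2
  rw [erf, hsplit]
  have hstep : (2 / (x + s)) * Real.sqrt (2 / Real.pi) * Real.exp (-x ^ 2 / 2)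
      ≤ 2 / Real.sqrt Real.pi * ∫ t in Set.Ioi a, Real.exp (-t ^ 2) := by
    rw [key]
    apply mul_le_mul_of_nonneg_left _ (by positivity)
    rw [← hEa, ← hGa]
    exact hI
  have hone : 2 / Real.sqrt Real.pi * (Real.sqrt Real.pi / 2) = 1 := by
    field_simp
  calc 2 / Real.sqrt Real.pi * (Real.sqrt Real.pi / 2 - ∫ t in Set.Ioi a, Real.exp (-t ^ 2))
      = 1 - 2 / Real.sqrt Real.pi * ∫ t in Set.Ioi a, Real.exp (-t ^ 2) := by
        rw [mul_sub, hone]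
    _ ≤ _ := by linarith [hstep]
end

section
/- Fix σ > 0. The function g(ℓ) = (1/ℓ²)·Erf(ℓ/(√2 σ)) is strictly decreasing on (0, ∞). That is, for 0 < ℓ₁ < ℓ₂, we have (1/ℓ₂²)·Erf(ℓ₂/(√2σ)) < (1/ℓ₁²)·Erf(ℓ₁/(√2σ)). -/
lemma key_ratio (a b : ℝ) (ha : 0 < a) (hab : a < b) :
    (∫ t in (0:ℝ)..b, Real.exp (-t ^ 2)) / b ^ 2 <
      (∫ t in (0:ℝ)..a, Real.exp (-t ^ 2)) / a ^ 2 := by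
  have hb : 0 < b := ha.trans hab
  have hcont : Continuous fun t : ℝ => Real.exp (-t ^ 2) := by continuity
  set Ia := ∫ t in (0:ℝ)..a, Real.exp (-t ^ 2) with hIa
  set Ib := ∫ t in (0:ℝ)..b, Real.exp (-t ^ 2) with hIb
  have hIa_pos : 0 < Ia := by
    refine intervalIntegral.intervalIntegral_pos_of_pos_on
      (hcont.intervalIntegrable _ _) (fun x _ => Real.exp_pos _) ha
  have hc : (0:ℝ) < b / a := div_pos hb ha
  have hsub : (∫ s in (0:ℝ)..a, Real.exp (-((b / a) * s) ^ 2)) = (a / b) * Ib := by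
    rw [intervalIntegral.integral_comp_mul_left (fun t => Real.exp (-t ^ 2)) hc.ne']
    rw [mul_zero, div_mul_cancel₀ _ ha.ne', smul_eq_mul, inv_div]
  have hJle : (∫ s in (0:ℝ)..a, Real.exp (-((b / a) * s) ^ 2)) ≤ Ia := by
    apply intervalIntegral.integral_mono_on ha.le
    · exact (hcont.comp (continuous_const.mul continuous_id)).intervalIntegrable _ _
    · exact hcont.intervalIntegrable _ _
    · intro s hs
      apply Real.exp_le_exp.2
      simp only [neg_le_neg_iff]
      have hs0 : 0 ≤ s := hs.1
      have : s ≤ (b / a) * s := by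
        nlinarith [(one_le_div ha).2 hab.le]
      nlinarith
  have hkey : a ^ 2 * Ib < b ^ 2 * Ia := by
    have h0 : a / b * Ib ≤ Ia := hsub ▸ hJle
    have h1 := mul_le_mul_of_nonneg_left h0 (by positivity : (0:ℝ) ≤ a * b)
    have h2 : a * b * (a / b * Ib) = a ^ 2 * Ib := by
      field_simp
    nlinarith [mul_pos (mul_pos hb (sub_pos.2 hab)) hIa_pos]
  rw [div_lt_div_iff₀ (by positivity) (by positivity)]
  nlinarith

/-- The dice-loss gradient variance `ℓ ↦ (1/ℓ²) Erf(ℓ/(√2 σ))` is strictly decreasing in the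
object length `ℓ` on `(0, ∞)`. -/
theorem dice_variance_strictAnti_in_length (σ : ℝ) (hσ : 0 < σ) :
    ∀ ℓ₁ ℓ₂ : ℝ, 0 < ℓ₁ → ℓ₁ < ℓ₂ →
      (1 / ℓ₂ ^ 2) * erf (ℓ₂ / (Real.sqrt 2 * σ)) <
        (1 / ℓ₁ ^ 2) * erf (ℓ₁ / (Real.sqrt 2 * σ)) := by
  intro ℓ₁ ℓ₂ h1 h12
  have h2 : 0 < ℓ₂ := h1.trans h12
  have hc : (0:ℝ) < Real.sqrt 2 * σ := by positivity
  set c := Real.sqrt 2 * σ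
  have hx1 : 0 < ℓ₁ / c := div_pos h1 hc
  have hx12 : ℓ₁ / c < ℓ₂ / c := by gcongr
  have hratio := key_ratio _ _ hx1 hx12
  have hπ : (0:ℝ) < 2 / Real.sqrt Real.pi := by
    have := Real.sqrt_pos.2 Real.pi_pos
    positivity
  unfold erf
  have e1 : (1 / ℓ₁ ^ 2) = (1 / c ^ 2) * (1 / (ℓ₁ / c) ^ 2) := by
    field_simp
  have e2 : (1 / ℓ₂ ^ 2) = (1 / c ^ 2) * (1 / (ℓ₂ / c) ^ 2) := by
    field_simp
  rw [e1, e2]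
  have hc2 : (0:ℝ) < 1 / c ^ 2 := by positivity
  rw [div_lt_div_iff₀ (by positivity) (by positivity)] at hratio
  have h1' := pow_pos hx1 2
  have h2' := pow_pos (hx1.trans hx12) 2
  rw [mul_assoc, mul_assoc]
  apply mul_lt_mul_of_pos_left _ hc2
  rw [one_div, one_div, inv_mul_eq_div, inv_mul_eq_div, div_lt_div_iff₀ h2' h1']
  nlinarith [mul_lt_mul_of_pos_left hratio hπ]
end
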